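/- (Exponentials of prime reciprocal sums replaced by logarithmic weights.) Let $\mathcal{P}$ be any finite set of primes and let $K \ge 1$ be a real number. Then $\exp\Big(K \sum_{p \in \mathcal{P}} \frac{1}{p}\Big) \le 1 + C_K \sum_{p \in \mathcal{P}} \frac{(\log p)^K}{p}$ for some constant $C_K$ depending only on $K$. -/

import Mathlib

open Finset Nat

lemma div_le_factorization_factorial17 {p n : ℕ} (hp : p.Prime) :
    n / p ≤ (n !).factorization p := by
  rcases Nat.eq_zero_or_pos (n / p) with h | h
  · omega
  have hpn : p ≤ n := by
    by_contra hc
    rw [Nat.div_eq_of_lt (by omega)] at h; omega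
  rw [← hp.pow_dvd_iff_le_factorization (Nat.factorial_ne_zero n),
    Nat.Prime.pow_dvd_factorial_iff hp (Nat.lt_succ_self _)]
  have h1 : 1 ∈ Finset.Ico 1 (Nat.log p n + 1) := by
    simp [Nat.succ_le_iff, Nat.log_pos hp.one_lt hpn]
  calc n / p = n / p ^ 1 := by rw [pow_one]
    _ ≤ ∑ i ∈ Finset.Ico 1 (Nat.log p n + 1), n / p ^ i :=
      Finset.single_le_sum (f := fun i => n / p ^ i) (fun i _ => Nat.zero_le _) h1

lemma log_factorial_lb17 (n : ℕ) :
    ∑ p ∈ Finset.range (n+1) with p.Prime, ((n / p : ℕ) : ℝ) * Real.log p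
      ≤ Real.log (n !) := by
  have hne : (n ! : ℕ) ≠ 0 := Nat.factorial_ne_zero n
  have hfac : ((n ! : ℕ) : ℝ) =
      ∏ p ∈ (n !).factorization.support, (p : ℝ) ^ ((n !).factorization p) := by
    conv_lhs => rw [← Nat.factorization_prod_pow_eq_self hne]
    rw [Finsupp.prod]
    push_cast
    rfl
  have hlog : Real.log (n !) =
      ∑ p ∈ (n !).factorization.support, ((n !).factorization p : ℝ) * Real.log p := by
    rw [hfac, Real.log_prod]
    · refine Finset.sum_congr rfl fun p hp => ?_
      rw [Real.log_pow]
    · intro p hp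
      have hp2 : p.Prime := Nat.prime_of_mem_primeFactors hp
      have : (0:ℝ) < p := by exact_mod_cast hp2.pos
      positivity
  rw [hlog]
  have hsub : (Finset.range (n+1)).filter Nat.Prime ⊆ (n !).factorization.support := by
    intro p hp
    rw [Finset.mem_filter, Finset.mem_range] at hp
    rw [Nat.support_factorization, Nat.mem_primeFactors]
    exact ⟨hp.2, Nat.dvd_factorial hp.2.pos (by omega), hne⟩
  calc ∑ p ∈ Finset.range (n+1) with p.Prime, ((n / p : ℕ) : ℝ) * Real.log p
      ≤ ∑ p ∈ Finset.range (n+1) with p.Prime, ((n !).factorization p : ℝ) * Real.log p := by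
        refine Finset.sum_le_sum fun p hp => ?_
        have := div_le_factorization_factorial17 (n := n) (Finset.mem_filter.1 hp).2
        exact mul_le_mul_of_nonneg_right (by exact_mod_cast this) (Real.log_natCast_nonneg p)
    _ ≤ ∑ p ∈ (n !).factorization.support, ((n !).factorization p : ℝ) * Real.log p := by
        refine Finset.sum_le_sum_of_subset_of_nonneg hsub fun p _ _ => ?_
        positivity

lemma theta_le17 (n : ℕ) :
    ∑ p ∈ Finset.range (n+1) with p.Prime, Real.log p ≤ n * Real.log 4 := by
  have h1 : Real.log (primorial n) ≤ Real.log (4 ^ n) :=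
    Real.log_le_log (by exact_mod_cast primorial_pos n)
      (by exact_mod_cast primorial_le_4_pow n)
  have h2 : Real.log (primorial n) = ∑ p ∈ Finset.range (n+1) with p.Prime, Real.log p := by
    rw [primorial]
    push_cast
    rw [Real.log_prod]
    intro p hp
    have := (Finset.mem_filter.1 hp).2.pos
    positivity
  rw [h2] at h1
  calc _ ≤ Real.log ((4:ℕ) ^ n) := h1
    _ = n * Real.log 4 := by push_cast [Real.log_pow]; norm_num

lemma cheb17 {n : ℕ} (hn : 1 ≤ n) :
    (∑ p ∈ Finset.range (n+1) with p.Prime, Real.log p / p) ≤ Real.log n + Real.log 4 := by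
  have hn0 : (0:ℝ) < n := by exact_mod_cast hn
  rw [← mul_le_mul_iff_right₀ hn0]
  have key : ∀ p ∈ (Finset.range (n+1)).filter Nat.Prime,
      (n:ℝ) * (Real.log p / p) ≤ ((n / p : ℕ) : ℝ) * Real.log p + Real.log p := by
    intro p hp
    obtain ⟨hplt, hpp⟩ := Finset.mem_filter.1 hp
    have hp0 : (0:ℝ) < p := by exact_mod_cast hpp.pos
    have hdiv : (n:ℝ) / p ≤ ((n / p : ℕ) : ℝ) + 1 := by
      rw [div_le_iff₀ hp0]
      have h := Nat.div_add_mod n p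
      have h2 := Nat.mod_lt n hpp.pos
      have : n ≤ (n / p + 1) * p := by nlinarith [Nat.div_add_mod n p]
      exact_mod_cast this
    have : (n:ℝ) * (Real.log p / p) = ((n:ℝ)/p) * Real.log p := by ring
    rw [this]
    nlinarith [Real.log_natCast_nonneg p]
  calc (n:ℝ) * ∑ p ∈ Finset.range (n+1) with p.Prime, Real.log p / p
      = ∑ p ∈ Finset.range (n+1) with p.Prime, (n:ℝ) * (Real.log p / p) := by
        rw [Finset.mul_sum]
    _ ≤ ∑ p ∈ Finset.range (n+1) with p.Prime, (((n / p : ℕ) : ℝ) * Real.log p + Real.log p) :=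
        Finset.sum_le_sum key
    _ = (∑ p ∈ Finset.range (n+1) with p.Prime, ((n / p : ℕ) : ℝ) * Real.log p)
        + ∑ p ∈ Finset.range (n+1) with p.Prime, Real.log p := Finset.sum_add_distrib
    _ ≤ Real.log (n !) + n * Real.log 4 := add_le_add (log_factorial_lb17 n) (theta_le17 n)
    _ ≤ n * Real.log n + n * Real.log 4 := by
        have h1 : (n ! : ℝ) ≤ (n:ℝ) ^ n := by exact_mod_cast Nat.factorial_le_pow n
        have h2 : Real.log (n !) ≤ Real.log ((n:ℝ) ^ n) :=
          Real.log_le_log (by exact_mod_cast Nat.factorial_pos n) h1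
        rw [Real.log_pow] at h2
        linarith
    _ = n * (Real.log n + Real.log 4) := by ring

noncomputable def A17 (n : ℕ) : ℝ := ∑ p ∈ Finset.range (n+1) with p.Prime, Real.log p / p
noncomputable def M17 (n : ℕ) : ℝ := ∑ p ∈ Finset.range (n+1) with p.Prime, (1:ℝ)/p

lemma sum_filter_succ17 (f : ℕ → ℝ) (n : ℕ) :
    ∑ p ∈ Finset.range (n+2) with p.Prime, f p
      = (∑ p ∈ Finset.range (n+1) with p.Prime, f p)
        + if (n+1).Prime then f (n+1) else 0 := by
  rw [Finset.sum_filter, Finset.sum_filter, Finset.sum_range_succ]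

lemma tele17 (g : ℕ → ℝ) : ∀ n, 2 ≤ n →
    ∑ k ∈ Finset.Ico 2 n, (g (k+1) - g k) = g n - g 2 := by
  intro n hn
  induction n, hn using Nat.le_induction with
  | base => simp
  | succ n hn ih =>
      rw [Finset.sum_Ico_succ_top hn, ih]
      ring

lemma abel17 : ∀ n, 2 ≤ n → M17 n = A17 n / Real.log n
    + ∑ k ∈ Finset.Ico 2 n, A17 k * (1/Real.log k - 1/Real.log (k+1)) := by
  intro n hn
  induction n, hn using Nat.le_induction with
  | base =>
      have h : (Finset.range 3).filter Nat.Prime = {2} := by decide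
      have hl2 : Real.log 2 ≠ 0 := ne_of_gt (Real.log_pos (by norm_num))
      simp only [M17, A17, h, Finset.sum_singleton, Finset.Ico_self, Finset.sum_empty, add_zero]
      push_cast
      field_simp
  | succ n hn ih =>
      have hn2 : (2:ℝ) ≤ (n:ℝ) := by exact_mod_cast hn
      have hln1 : Real.log ((n:ℝ)+1) ≠ 0 := by
        refine ne_of_gt (Real.log_pos ?_); linarith
      have hln : Real.log (n:ℝ) ≠ 0 := by
        refine ne_of_gt (Real.log_pos ?_); linarith
      have hx : ((n:ℝ)+1) ≠ 0 := by positivity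
      have hM : M17 (n+1) = M17 n + if (n+1).Prime then (1:ℝ)/((n+1:ℕ):ℝ) else 0 :=
        sum_filter_succ17 _ n
      have hA : A17 (n+1) = A17 n
          + if (n+1).Prime then Real.log ((n+1:ℕ):ℝ)/((n+1:ℕ):ℝ) else 0 :=
        sum_filter_succ17 _ n
      push_cast at hM hA
      have key : (if (n+1).Prime then (1:ℝ)/((n:ℝ)+1) else 0)
          = (if (n+1).Prime then Real.log ((n:ℝ)+1)/((n:ℝ)+1) else 0) / Real.log ((n:ℝ)+1) := by
        split
        · field_simp
        · simp
      push_cast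
      rw [hM, hA, ih, key, Finset.sum_Ico_succ_top hn]
      set t := (if (n+1).Prime then Real.log ((n:ℝ)+1)/((n:ℝ)+1) else 0) with ht
      field_simp
      ring

noncomputable def B17 : ℝ := 1 + 2 * (Real.log 4 / Real.log 2) - Real.log (Real.log 2)

lemma mertens17 {n : ℕ} (hn : 2 ≤ n) : M17 n ≤ Real.log (Real.log n) + B17 := by
  have hn2 : (2:ℝ) ≤ (n:ℝ) := by exact_mod_cast hn
  have hl2 : (0:ℝ) < Real.log 2 := Real.log_pos (by norm_num)
  have hl4 : (0:ℝ) ≤ Real.log 4 := Real.log_nonneg (by norm_num)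
  have hln : (0:ℝ) < Real.log n := Real.log_pos (by linarith)
  have hl2n : Real.log 2 ≤ Real.log n := Real.log_le_log (by norm_num) (by linarith)
  rw [abel17 n hn]
  have hterm1 : A17 n / Real.log n ≤ 1 + Real.log 4 / Real.log 2 := by
    have hA := cheb17 (n := n) (by omega)
    have h0 : A17 n ≤ Real.log (n:ℝ) + Real.log 4 := hA
    have h1 : A17 n / Real.log n ≤ (Real.log n + Real.log 4) / Real.log n := by
      gcongr
    rw [_root_.add_div, div_self hln.ne'] at h1
    have h2 : Real.log 4 / Real.log n ≤ Real.log 4 / Real.log 2 :=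
      div_le_div_of_nonneg_left hl4 hl2 hl2n
    linarith
  have hsum : (∑ k ∈ Finset.Ico 2 n, A17 k * (1/Real.log k - 1/Real.log (k+1)))
      ≤ ∑ k ∈ Finset.Ico 2 n,
          ((Real.log (Real.log (k+1:ℕ)) - Real.log (Real.log k))
            + Real.log 4 * (-(1/Real.log (k+1:ℕ)) - -(1/Real.log k))) := by
    refine Finset.sum_le_sum fun k hk => ?_
    obtain ⟨hk2, hkn⟩ := Finset.mem_Ico.1 hk
    have hk2' : (2:ℝ) ≤ (k:ℝ) := by exact_mod_cast hk2
    push_cast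
    have hy : (0:ℝ) < Real.log k := Real.log_pos (by linarith)
    have hx : (0:ℝ) < Real.log ((k:ℝ)+1) := Real.log_pos (by linarith)
    have hxy : Real.log (k:ℝ) ≤ Real.log ((k:ℝ)+1) := Real.log_le_log (by linarith) (by linarith)
    have hΔ : (0:ℝ) ≤ 1/Real.log (k:ℝ) - 1/Real.log ((k:ℝ)+1) := by
      have := one_div_le_one_div_of_le hy hxy
      linarith
    have hA : A17 k ≤ Real.log (k:ℝ) + Real.log 4 := cheb17 (by omega)
    have h1 : A17 k * (1/Real.log (k:ℝ) - 1/Real.log ((k:ℝ)+1))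
        ≤ (Real.log (k:ℝ) + Real.log 4) * (1/Real.log (k:ℝ) - 1/Real.log ((k:ℝ)+1)) :=
      mul_le_mul_of_nonneg_right hA hΔ
    have hid : Real.log (k:ℝ) * (1/Real.log (k:ℝ) - 1/Real.log ((k:ℝ)+1))
        = 1 - Real.log (k:ℝ)/Real.log ((k:ℝ)+1) := by
      field_simp
    have hlog : Real.log (Real.log (k:ℝ) / Real.log ((k:ℝ)+1))
        ≤ Real.log (k:ℝ) / Real.log ((k:ℝ)+1) - 1 :=
      Real.log_le_sub_one_of_pos (by positivity)
    rw [Real.log_div hy.ne' hx.ne'] at hlog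
    nlinarith
  have e1 : (∑ k ∈ Finset.Ico 2 n,
        ((Real.log (Real.log (k+1:ℕ)) - Real.log (Real.log k))
          + Real.log 4 * (-(1/Real.log (k+1:ℕ)) - -(1/Real.log k))))
      = (Real.log (Real.log (n:ℝ)) - Real.log (Real.log (2:ℕ)))
        + Real.log 4 * ((-(1/Real.log (n:ℝ))) - (-(1/Real.log (2:ℕ)))) := by
    rw [Finset.sum_add_distrib, ← Finset.mul_sum,
      tele17 (fun k => Real.log (Real.log k)) n hn,
      tele17 (fun k => -(1/Real.log k)) n hn]
  rw [e1] at hsum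
  have hc2 : Real.log ((2:ℕ):ℝ) = Real.log 2 := by norm_num
  rw [hc2] at hsum
  have h9 : (0:ℝ) ≤ Real.log 4 / Real.log (n:ℝ) := by positivity
  have hcn : Real.log 4 * (1/Real.log (n:ℝ)) = Real.log 4 / Real.log (n:ℝ) := by ring
  have hcc : Real.log 4 * (1/Real.log 2) = Real.log 4 / Real.log 2 := by ring
  have hB : B17 = 1 + 2 * (Real.log 4 / Real.log 2) - Real.log (Real.log 2) := rfl
  have hexp : Real.log 4 * (-(1 / Real.log (n:ℝ)) - -(1 / Real.log 2))
      = Real.log 4 / Real.log 2 - Real.log 4 / Real.log (n:ℝ) := by ring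
  rw [hexp] at hsum
  linarith [hsum, hterm1, h9]

/-- Exponentials of prime reciprocal sums can be replaced by logarithmic weights: for
any real `K ≥ 1` there is a constant `C_K` such that for every finite set `𝒫` of primes,
`exp(K ∑_{p ∈ 𝒫} 1/p) ≤ 1 + C_K ∑_{p ∈ 𝒫} (log p)^K / p`. -/
theorem stmt_17 (K : ℝ) (hK : 1 ≤ K) :
    ∃ C : ℝ, 0 < C ∧
      ∀ P : Finset ℕ, (∀ p ∈ P, p.Prime) →
        Real.exp (K * ∑ p ∈ P, (1 : ℝ) / p)
          ≤ 1 + C * ∑ p ∈ P, (Real.log p) ^ K / p := by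
  have hK0 : (0:ℝ) < K := by linarith
  refine ⟨K * Real.exp (K * (1 + B17)), by positivity, ?_⟩
  set C := K * Real.exp (K * (1 + B17)) with hC
  suffices h : ∀ n (P : Finset ℕ), P.card ≤ n → (∀ p ∈ P, p.Prime) →
      Real.exp (K * ∑ p ∈ P, (1 : ℝ) / p) ≤ 1 + C * ∑ p ∈ P, (Real.log p) ^ K / p by
    intro P hP
    exact h P.card P le_rfl hP
  intro n
  induction n with
  | zero =>
      intro P hcard hP
      have : P = ∅ := Finset.card_eq_zero.1 (Nat.le_zero.1 hcard)
      subst this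
      simp
  | succ n ih =>
      intro P hcard hP
      rcases P.eq_empty_or_nonempty with rfl | hne
      · simp
      set q := P.max' hne with hqdef
      have hq : q ∈ P := P.max'_mem hne
      have hqp : q.Prime := hP q hq
      have hq2 : 2 ≤ q := hqp.two_le
      have hq2' : (2:ℝ) ≤ (q:ℝ) := by exact_mod_cast hq2
      have hq0 : (0:ℝ) < q := by linarith
      set P' := P.erase q with hP'def
      have hcard' : P'.card ≤ n := by
        have h1 : P'.card = P.card - 1 := Finset.card_erase_of_mem hq
        have h2 := Finset.card_pos.2 hne
        omega
      have hP' : ∀ p ∈ P', p.Prime := fun p hp => hP p (Finset.mem_of_mem_erase hp)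
      have IH := ih P' hcard' hP'
      have hSsplit : ∑ p ∈ P, (1:ℝ)/p = (1:ℝ)/q + ∑ p ∈ P', (1:ℝ)/p :=
        (Finset.add_sum_erase P _ hq).symm
      have hTsplit : ∑ p ∈ P, (Real.log p)^K/p
          = (Real.log q)^K/q + ∑ p ∈ P', (Real.log p)^K/p :=
        (Finset.add_sum_erase P _ hq).symm
      have hS'le : ∑ p ∈ P', (1:ℝ)/p ≤ M17 q := by
        refine Finset.sum_le_sum_of_subset_of_nonneg ?_ ?_
        · intro p hp
          rw [Finset.mem_filter, Finset.mem_range]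
          refine ⟨?_, hP' p hp⟩
          have := P.le_max' p (Finset.mem_of_mem_erase hp)
          omega
        · intro p _ _
          positivity
      have hmer : M17 q ≤ Real.log (Real.log q) + B17 := mertens17 hq2
      have hlogq : (0:ℝ) < Real.log (q:ℝ) := Real.log_pos (by linarith)
      have hrpow : Real.exp (K * Real.log (Real.log (q:ℝ))) = (Real.log (q:ℝ))^K := by
        rw [Real.rpow_def_of_pos hlogq, mul_comm]
      have hexpS' : Real.exp (K * ∑ p ∈ P', (1:ℝ)/p)
          ≤ Real.exp (K*B17) * (Real.log (q:ℝ))^K := by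
        calc Real.exp (K * ∑ p ∈ P', (1:ℝ)/p)
            ≤ Real.exp (K*(Real.log (Real.log (q:ℝ)) + B17)) :=
              Real.exp_le_exp.2 (mul_le_mul_of_nonneg_left (hS'le.trans hmer) hK0.le)
          _ = Real.exp (K*B17) * Real.exp (K * Real.log (Real.log (q:ℝ))) := by
              rw [mul_add, Real.exp_add, mul_comm (Real.exp (K * Real.log (Real.log (q:ℝ))))]
          _ = _ := by rw [hrpow]
      have hxq : Real.exp (K * (1/(q:ℝ))) ≤ 1 + K/q * Real.exp K := by
        set x := K/(q:ℝ) with hx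
        have hx0 : 0 ≤ x := by positivity
        have e1 : 1 - x ≤ Real.exp (-x) := by linarith [Real.add_one_le_exp (-x)]
        have e2 : (1-x) * Real.exp x ≤ 1 := by
          calc (1-x) * Real.exp x ≤ Real.exp (-x) * Real.exp x :=
                mul_le_mul_of_nonneg_right e1 (Real.exp_pos x).le
            _ = 1 := by rw [← Real.exp_add]; simp
        have e3 : Real.exp x ≤ Real.exp K :=
          Real.exp_le_exp.2 (by rw [hx]; exact div_le_self hK0.le (by linarith))
        have : K * (1/(q:ℝ)) = x := by rw [hx]; ring
        rw [this]
        nlinarith [Real.exp_pos x]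
      have hT'nonneg : 0 ≤ ∑ p ∈ P', (Real.log p)^K/p := by
        refine Finset.sum_nonneg fun p hp => ?_
        have := Real.rpow_nonneg (Real.log_natCast_nonneg p) K
        positivity
      have hexpS'0 : 0 ≤ Real.exp (K * ∑ p ∈ P', (1:ℝ)/p) := (Real.exp_pos _).le
      have hCsplit : C = K * Real.exp K * Real.exp (K * B17) := by
        rw [hC, show K*(1+B17) = K + K*B17 by ring, Real.exp_add]; ring
      calc Real.exp (K * ∑ p ∈ P, (1:ℝ)/p)
          = Real.exp (K * (1/(q:ℝ))) * Real.exp (K * ∑ p ∈ P', (1:ℝ)/p) := by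
            rw [hSsplit, mul_add, Real.exp_add]
        _ ≤ (1 + K/q * Real.exp K) * Real.exp (K * ∑ p ∈ P', (1:ℝ)/p) :=
            mul_le_mul_of_nonneg_right hxq hexpS'0
        _ = Real.exp (K * ∑ p ∈ P', (1:ℝ)/p)
            + (K/q * Real.exp K) * Real.exp (K * ∑ p ∈ P', (1:ℝ)/p) := by ring
        _ ≤ (1 + C * ∑ p ∈ P', (Real.log p)^K/p)
            + (K/q * Real.exp K) * (Real.exp (K*B17) * (Real.log (q:ℝ))^K) := by
            refine add_le_add IH (mul_le_mul_of_nonneg_left hexpS' (by positivity))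
        _ ≤ 1 + C * ∑ p ∈ P, (Real.log p)^K/p := by
            apply le_of_eq
            rw [hTsplit, hCsplit]
            ring
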